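/- For every p₂ ∈ [0,1], the function t ↦ (−log(1−t)) / ((1−p₂) + 2·p₂·t) is strictly monotonically increasing on the open interval (0,1). -/

import Mathlib

theorem stmt_15 (p₂ : ℝ) (h0 : 0 ≤ p₂) (h1 : p₂ ≤ 1) :
    StrictMonoOn (fun t : ℝ => (-Real.log (1 - t)) / ((1 - p₂) + 2 * p₂ * t))
      (Set.Ioo (0 : ℝ) 1) := by
  have hden : ∀ t ∈ Set.Ioo (0:ℝ) 1, 0 < (1 - p₂) + 2 * p₂ * t := by
    intro t ht
    obtain ⟨ht0, ht1⟩ := ht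
    nlinarith
  have hderiv : ∀ t ∈ Set.Ioo (0:ℝ) 1,
      HasDerivAt (fun t : ℝ => (-Real.log (1 - t)) / ((1 - p₂) + 2 * p₂ * t))
        (((1/(1-t)) * ((1 - p₂) + 2 * p₂ * t) - (-Real.log (1-t)) * (2*p₂))
          / ((1 - p₂) + 2 * p₂ * t)^2) t := by
    intro t ht
    obtain ⟨ht0, ht1⟩ := ht
    have h1t : (1:ℝ) - t ≠ 0 := by linarith
    have hg : HasDerivAt (fun t : ℝ => -Real.log (1 - t)) (1/(1-t)) t := by
      have hlin : HasDerivAt (fun t : ℝ => 1 - t) (-1) t := by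
        simpa using (hasDerivAt_id t).const_sub 1
      have := (Real.hasDerivAt_log h1t).comp t hlin
      have h2 := this.neg
      refine h2.congr_deriv ?_
      ring
    have hh : HasDerivAt (fun t : ℝ => (1 - p₂) + 2 * p₂ * t) (2*p₂) t := by
      simpa using ((hasDerivAt_id t).const_mul (2*p₂)).const_add (1 - p₂)
    exact hg.div hh (ne_of_gt (hden t ⟨ht0, ht1⟩))
  apply StrictMonoOn.mono (s := Set.Ioo (0:ℝ) 1) ?_ le_rfl
  apply strictMonoOn_of_deriv_pos (convex_Ioo 0 1)
  · intro t ht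
    exact (hderiv t ht).continuousAt.continuousWithinAt
  · intro t ht
    rw [interior_Ioo] at ht
    rw [(hderiv t ht).deriv]
    obtain ⟨ht0, ht1⟩ := ht
    have h1t : (0:ℝ) < 1 - t := by linarith
    have hd := hden t ⟨ht0, ht1⟩
    apply div_pos _ (by positivity)
    -- numerator: ((1-p₂)+2p₂t)/(1-t) + 2p₂ log(1-t) > 0
    rcases eq_or_lt_of_le h0 with h | h
    · -- p₂ = 0
      rw [← h]
      have : 0 < 1/(1-t) := by positivity
      nlinarith
    · have hlog : Real.log (1-t) > 1 - 1/(1-t) := by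
        have hx : (0:ℝ) < 1/(1-t) := by positivity
        have hx1 : 1/(1-t) ≠ 1 := by
          intro hc
          have : (1:ℝ) - t = 1 := by field_simp at hc; linarith
          linarith
        have := Real.log_lt_sub_one_of_pos hx hx1
        rw [Real.log_div one_ne_zero (ne_of_gt h1t), Real.log_one] at this
        linarith
      have hb : 0 < 2 * p₂ := by linarith
      have key : 2 * p₂ * Real.log (1-t) > 2 * p₂ * (1 - 1/(1-t)) :=
        (mul_lt_mul_iff_right₀ hb).2 hlog
      have h1 : 1 - 1/(1-t) = -t/(1-t) := by field_simp; ring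
      rw [h1] at key
      have hfin : (1/(1-t)) * ((1 - p₂) + 2 * p₂ * t) - 2*p₂ * (-t/(1-t))
          ≥ (1-p₂)/(1-t) := by
        rw [ge_iff_le, div_le_iff₀ h1t]
        field_simp
        ring_nf
        nlinarith
      have hnn : (0:ℝ) ≤ (1-p₂)/(1-t) := div_nonneg (by linarith) h1t.le
      ring_nf at key hnn ⊢
      linarith [key, hnn]
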